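/- Let H be a nonzero complex Hilbert space and let A be a bounded linear operator on H. Then for every α with 0 ≤ α ≤ 1, ‖α·(Re(A))² + (1 − α)·(Im(A))²‖ ≤ w(A)². -/

import Mathlib

open scoped InnerProductSpace
open ContinuousLinearMap

variable {H : Type*} [NormedAddCommGroup H] [InnerProductSpace ℂ H]
  [CompleteSpace H] [Nontrivial H]

lemma key' (S : H →L[ℂ] H) (hS : adjoint S = S) (M : ℝ) (hM : 0 ≤ M)
    (h : ∀ x : H, ‖x‖ = 1 → ‖⟪S x, x⟫_ℂ‖ ≤ M) : ‖S‖ ≤ M := by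
  have h' : ∀ x : H, |Complex.re ⟪S x, x⟫_ℂ| ≤ M * ‖x‖ ^ 2 := by
    intro x
    rcases eq_or_ne x 0 with rfl | hx
    · simp
    · have hnx : ‖x‖ ≠ 0 := norm_ne_zero_iff.mpr hx
      have hu : ‖(‖x‖⁻¹ : ℂ) • x‖ = 1 := by
        simp [norm_smul, inv_mul_cancel₀ hnx]
      have := h _ hu
      have hcalc : ⟪S ((‖x‖⁻¹ : ℂ) • x), (‖x‖⁻¹ : ℂ) • x⟫_ℂ
          = (‖x‖⁻¹ : ℂ) ^ 2 * ⟪S x, x⟫_ℂ := by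
        simp [map_smul, inner_smul_left, inner_smul_right]
        ring
      rw [hcalc] at this
      have h2 : ‖((‖x‖⁻¹ : ℂ) ^ 2 * ⟪S x, x⟫_ℂ)‖ = (‖x‖⁻¹) ^ 2 * ‖⟪S x, x⟫_ℂ‖ := by
        simp [norm_mul, norm_pow]
      rw [h2] at this
      have habs : |Complex.re ⟪S x, x⟫_ℂ| ≤ ‖⟪S x, x⟫_ℂ‖ := Complex.abs_re_le_norm _
      have hpos : (0:ℝ) < ‖x‖ ^ 2 := by positivity
      calc |Complex.re ⟪S x, x⟫_ℂ| ≤ ‖⟪S x, x⟫_ℂ‖ := habs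
        _ ≤ M * ‖x‖ ^ 2 := by
            have h3 : ‖⟪S x, x⟫_ℂ‖ = ‖x‖ ^ 2 * (‖x‖⁻¹ ^ 2 * ‖⟪S x, x⟫_ℂ‖) := by
              field_simp
            rw [h3, mul_comm M]
            exact mul_le_mul_of_nonneg_left this hpos.le
  have hre : ∀ u v : H, Complex.re ⟪S v, u⟫_ℂ = Complex.re ⟪S u, v⟫_ℂ := by
    intro u v
    have h1 : ⟪S u, v⟫_ℂ = ⟪u, S v⟫_ℂ := by
      conv_lhs => rw [← hS]
      exact adjoint_inner_left S v u
    have h2 : ⟪u, S v⟫_ℂ = (starRingEnd ℂ) ⟪S v, u⟫_ℂ := (inner_conj_symm _ _).symm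
    rw [h1, h2, Complex.conj_re]
  have hpol : ∀ x y : H, 4 * Complex.re ⟪S x, y⟫_ℂ
      = Complex.re ⟪S (x+y), x+y⟫_ℂ - Complex.re ⟪S (x-y), x-y⟫_ℂ := by
    intro x y
    have e1 : ⟪S (x+y), x+y⟫_ℂ
        = ⟪S x, x⟫_ℂ + ⟪S x, y⟫_ℂ + ⟪S y, x⟫_ℂ + ⟪S y, y⟫_ℂ := by
      rw [map_add, inner_add_left, inner_add_right, inner_add_right]; ring
    have e2 : ⟪S (x-y), x-y⟫_ℂ
        = ⟪S x, x⟫_ℂ - ⟪S x, y⟫_ℂ - ⟪S y, x⟫_ℂ + ⟪S y, y⟫_ℂ := by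
      rw [map_sub, inner_sub_left, inner_sub_right, inner_sub_right]; ring
    rw [e1, e2]
    simp only [Complex.add_re, Complex.sub_re]
    have := hre x y
    linarith
  have hbound : ∀ x y : H, 4 * Complex.re ⟪S x, y⟫_ℂ
      ≤ M * ‖x + y‖ ^ 2 + M * ‖x - y‖ ^ 2 := by
    intro x y
    have b1 := abs_le.mp (h' (x + y))
    have b2 := abs_le.mp (h' (x - y))
    rw [hpol x y]
    linarith [b1.2, b2.1]
  refine opNorm_le_bound _ hM ?_
  intro x
  rcases eq_or_ne (S x) 0 with h0 | h0
  · rw [h0]; simp; positivity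
  · have hSx : (0:ℝ) < ‖S x‖ := norm_pos_iff.mpr h0
    set y : H := ((‖x‖ / ‖S x‖ : ℝ) : ℂ) • S x with hy
    have hny : ‖y‖ = ‖x‖ := by
      rw [hy, norm_smul]
      simp [abs_of_nonneg (div_nonneg (norm_nonneg x) (norm_nonneg _)),
        div_mul_cancel₀ _ hSx.ne']
    have hinner : Complex.re ⟪S x, y⟫_ℂ = ‖x‖ * ‖S x‖ := by
      rw [hy, inner_smul_right, Complex.re_ofReal_mul, ← RCLike.re_to_complex,
        inner_self_eq_norm_sq]
      field_simp
    have hpar : ‖x + y‖ ^ 2 + ‖x - y‖ ^ 2 = 4 * ‖x‖ ^ 2 := by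
      have := parallelogram_law_with_norm ℂ x y
      rw [hny] at this
      nlinarith [this]
    have hx0 : (0:ℝ) < ‖x‖ := by
      rcases eq_or_ne x 0 with rfl | hx
      · simp at h0
      · exact norm_pos_iff.mpr hx
    have hbd := hbound x y
    rw [hinner] at hbd
    have hsum : M * ‖x + y‖ ^ 2 + M * ‖x - y‖ ^ 2 = M * (4 * ‖x‖ ^ 2) := by
      rw [← mul_add, hpar]
    rw [hsum] at hbd
    nlinarith [hbd, hx0, mul_pos hx0 hx0]

/-- The numerical radius of a bounded linear operator. -/
noncomputable def numRad (A : H →L[ℂ] H) : ℝ :=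
  ⨆ x : {x : H // ‖x‖ = 1}, ‖⟪A x.1, x.1⟫_ℂ‖

/-- The Crawford number of a bounded linear operator. -/
noncomputable def crawford (A : H →L[ℂ] H) : ℝ :=
  ⨅ x : {x : H // ‖x‖ = 1}, ‖⟪A x.1, x.1⟫_ℂ‖

/-- The Euclidean operator radius of a pair of bounded linear operators. -/
noncomputable def euclRad (B C : H →L[ℂ] H) : ℝ :=
  ⨆ x : {x : H // ‖x‖ = 1}, Real.sqrt (‖⟪B x.1, x.1⟫_ℂ‖ ^ 2 + ‖⟪C x.1, x.1⟫_ℂ‖ ^ 2)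

/-- The absolute value `|A| = (A*A)^(1/2)` of a bounded linear operator. -/
noncomputable def opAbs (A : H →L[ℂ] H) : H →L[ℂ] H := CFC.sqrt (adjoint A * A)

/-- The real part `Re(A) = (A + A*)/2` of a bounded linear operator. -/
noncomputable def reOp (A : H →L[ℂ] H) : H →L[ℂ] H := (2 : ℂ)⁻¹ • (A + adjoint A)

/-- The imaginary part `Im(A) = (A - A*)/(2i)` of a bounded linear operator. -/
noncomputable def imOp (A : H →L[ℂ] H) : H →L[ℂ] H := (2 * Complex.I)⁻¹ • (A - adjoint A)

lemma reOp_sa (A : H →L[ℂ] H) : adjoint (reOp A) = reOp A := by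
  have h2 : star ((2:ℂ)⁻¹) = (2:ℂ)⁻¹ := by
    rw [Complex.star_def, map_inv₀, map_ofNat]
  rw [← star_eq_adjoint]
  simp only [reOp, star_smul, star_add, ← star_eq_adjoint, star_star, h2]
  rw [add_comm]

lemma imOp_sa (A : H →L[ℂ] H) : adjoint (imOp A) = imOp A := by
  have hinv : (2 * Complex.I)⁻¹ = -Complex.I / 2 := by
    rw [mul_inv, Complex.inv_I]
    ring
  have h1 : star ((2 * Complex.I)⁻¹) = -((2 * Complex.I)⁻¹) := by
    rw [hinv, Complex.star_def, map_div₀, map_neg, Complex.conj_I, map_ofNat]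
    ring
  rw [← star_eq_adjoint]
  simp only [imOp, star_smul, star_sub, ← star_eq_adjoint, star_star]
  rw [h1, neg_smul, ← smul_neg, neg_sub]

lemma inner_reOp (A : H →L[ℂ] H) (x : H) :
    ⟪reOp A x, x⟫_ℂ = (Complex.re ⟪A x, x⟫_ℂ : ℂ) := by
  have hadj : ⟪adjoint A x, x⟫_ℂ = (starRingEnd ℂ) ⟪A x, x⟫_ℂ := by
    rw [adjoint_inner_left, ← inner_conj_symm]
  simp only [reOp, ContinuousLinearMap.smul_apply, ContinuousLinearMap.add_apply,
    inner_smul_left, inner_add_left, hadj]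
  rw [Complex.add_conj]
  simp [starRingEnd_apply]

lemma inner_imOp (A : H →L[ℂ] H) (x : H) :
    ⟪imOp A x, x⟫_ℂ = (-(Complex.im ⟪A x, x⟫_ℂ) : ℂ) := by
  have hadj : ⟪adjoint A x, x⟫_ℂ = (starRingEnd ℂ) ⟪A x, x⟫_ℂ := by
    rw [adjoint_inner_left, ← inner_conj_symm]
  have hinv : (2 * Complex.I)⁻¹ = -Complex.I / 2 := by
    rw [mul_inv, Complex.inv_I]
    ring
  have h1 : (starRingEnd ℂ) (-Complex.I / 2) = Complex.I / 2 := by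
    rw [map_div₀, map_neg, Complex.conj_I, map_ofNat]
    ring
  simp only [imOp, ContinuousLinearMap.smul_apply, ContinuousLinearMap.sub_apply,
    inner_smul_left, inner_sub_left, hadj, hinv, h1]
  rw [Complex.sub_conj]
  push_cast
  linear_combination ((⟪A x, x⟫_ℂ).im : ℂ) * Complex.I_sq

theorem stmt13 (A : H →L[ℂ] H) (α : ℝ) (h0 : 0 ≤ α) (h1 : α ≤ 1) :
    ‖α • (reOp A) ^ 2 + (1 - α) • (imOp A) ^ 2‖ ≤ (numRad A) ^ 2 := by
  have hbdd : BddAbove (Set.range fun x : {x : H // ‖x‖ = 1} => ‖⟪A x.1, x.1⟫_ℂ‖) := by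
    refine ⟨‖A‖, ?_⟩
    rintro _ ⟨x, rfl⟩
    calc ‖⟪A x.1, x.1⟫_ℂ‖ ≤ ‖A x.1‖ * ‖x.1‖ := norm_inner_le_norm _ _
      _ ≤ (‖A‖ * ‖x.1‖) * ‖x.1‖ := by
          gcongr; exact le_opNorm A x.1
      _ = ‖A‖ := by rw [x.2]; ring
  have hw0 : 0 ≤ numRad A := Real.iSup_nonneg fun _ => norm_nonneg _
  have hunit : ∀ x : H, ‖x‖ = 1 → ‖⟪A x, x⟫_ℂ‖ ≤ numRad A := fun x hx =>
    le_ciSup hbdd (⟨x, hx⟩ : {x : H // ‖x‖ = 1})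
  have hRe : ‖reOp A‖ ≤ numRad A := by
    refine key' _ (reOp_sa A) _ hw0 ?_
    intro x hx
    rw [inner_reOp]
    calc ‖(Complex.re ⟪A x, x⟫_ℂ : ℂ)‖ = |Complex.re ⟪A x, x⟫_ℂ| := by
          rw [Complex.norm_real, Real.norm_eq_abs]
      _ ≤ ‖⟪A x, x⟫_ℂ‖ := Complex.abs_re_le_norm _
      _ ≤ numRad A := hunit x hx
  have hIm : ‖imOp A‖ ≤ numRad A := by
    refine key' _ (imOp_sa A) _ hw0 ?_
    intro x hx
    rw [inner_imOp]
    calc ‖(-(Complex.im ⟪A x, x⟫_ℂ) : ℂ)‖ = |Complex.im ⟪A x, x⟫_ℂ| := by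
          push_cast
          rw [norm_neg, Complex.norm_real, Real.norm_eq_abs]
      _ ≤ ‖⟪A x, x⟫_ℂ‖ := Complex.abs_im_le_norm _
      _ ≤ numRad A := hunit x hx
  have hR2 : ‖(reOp A) ^ 2‖ ≤ ‖reOp A‖ ^ 2 := norm_pow_le' _ two_pos
  have hI2 : ‖(imOp A) ^ 2‖ ≤ ‖imOp A‖ ^ 2 := norm_pow_le' _ two_pos
  have hRn : (0:ℝ) ≤ ‖reOp A‖ := norm_nonneg _
  have hIn : (0:ℝ) ≤ ‖imOp A‖ := norm_nonneg _
  calc ‖α • (reOp A) ^ 2 + (1 - α) • (imOp A) ^ 2‖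
      ≤ ‖α • (reOp A) ^ 2‖ + ‖(1 - α) • (imOp A) ^ 2‖ := norm_add_le _ _
    _ = |α| * ‖(reOp A) ^ 2‖ + |1 - α| * ‖(imOp A) ^ 2‖ := by
        rw [norm_smul, norm_smul, Real.norm_eq_abs, Real.norm_eq_abs]
    _ = α * ‖(reOp A) ^ 2‖ + (1 - α) * ‖(imOp A) ^ 2‖ := by
        rw [abs_of_nonneg h0, abs_of_nonneg (by linarith)]
    _ ≤ α * (numRad A) ^ 2 + (1 - α) * (numRad A) ^ 2 := by
        have e1 : ‖(reOp A) ^ 2‖ ≤ (numRad A) ^ 2 :=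
          hR2.trans (pow_le_pow_left₀ hRn hRe 2)
        have e2 : ‖(imOp A) ^ 2‖ ≤ (numRad A) ^ 2 :=
          hI2.trans (pow_le_pow_left₀ hIn hIm 2)
        have t1 := mul_le_mul_of_nonneg_left e1 h0
        have t2 := mul_le_mul_of_nonneg_left e2 (by linarith : (0:ℝ) ≤ 1 - α)
        linarith
    _ = (numRad A) ^ 2 := by ring
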